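/- Let N ≥ 1 be an integer, ω = exp(2πi/N), and let r, b_1, b_2 ∈ ℂ satisfy b_1 ≠ b_2, r^N ≠ b_1^N and r^N ≠ b_2^N. Then ∑_{ρ=0}^{N−1} (r ω^{−ρ}) / ( (r ω^{−ρ} − b_1)(r ω^{−ρ} − b_2) ) = N r^N (b_1^N − b_2^N) / ( (b_1 − b_2)(b_1^N − r^N)(b_2^N − r^N) ). -/

import Mathlib

open Finset

theorem S3_summation (N : ℕ) (hN : 1 ≤ N) (ω : ℂ)
    (hω : ω = Complex.exp (2 * (Real.pi : ℂ) * Complex.I / (N : ℂ)))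
    (r b₁ b₂ : ℂ) (hb : b₁ ≠ b₂) (h1 : r ^ N ≠ b₁ ^ N) (h2 : r ^ N ≠ b₂ ^ N) :
    ∑ ρ ∈ Finset.range N,
        (r * ω ^ (-(ρ : ℤ))) /
          ((r * ω ^ (-(ρ : ℤ)) - b₁) * (r * ω ^ (-(ρ : ℤ)) - b₂)) =
      (N : ℂ) * r ^ N * (b₁ ^ N - b₂ ^ N) /
        ((b₁ - b₂) * (b₁ ^ N - r ^ N) * (b₂ ^ N - r ^ N)) := by
  have hNne : N ≠ 0 := by omega
  have hprim : IsPrimitiveRoot ω N := by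
    rw [hω]; exact Complex.isPrimitiveRoot_exp N hNne
  have hζprim : IsPrimitiveRoot ω⁻¹ N := hprim.inv
  have hζN : ω⁻¹ ^ N = 1 := hζprim.pow_eq_one
  have hD : b₁ - b₂ ≠ 0 := sub_ne_zero.mpr hb
  have hE₁ : r ^ N - b₁ ^ N ≠ 0 := sub_ne_zero.mpr h1
  have hE₂ : r ^ N - b₂ ^ N ≠ 0 := sub_ne_zero.mpr h2
  simp only [zpow_neg, zpow_natCast, ← inv_pow]
  have hcN : ∀ ρ : ℕ, (r * ω⁻¹ ^ ρ) ^ N = r ^ N := by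
    intro ρ
    rw [mul_pow, ← pow_mul, Nat.mul_comm, pow_mul, hζN, one_pow, mul_one]
  have key : ∀ ρ ∈ Finset.range N,
      (r * ω⁻¹ ^ ρ) / ((r * ω⁻¹ ^ ρ - b₁) * (r * ω⁻¹ ^ ρ - b₂)) =
      ∑ i ∈ Finset.range N,
        (b₁ ^ (i + 1) / ((b₁ - b₂) * (r ^ N - b₁ ^ N))
          - b₂ ^ (i + 1) / ((b₁ - b₂) * (r ^ N - b₂ ^ N))) * (r * ω⁻¹ ^ ρ) ^ (N - 1 - i) := by
    intro ρ _
    set c : ℂ := r * ω⁻¹ ^ ρ with hc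
    have hcNρ : c ^ N = r ^ N := hcN ρ
    have hc₁ : c - b₁ ≠ 0 := by
      intro h
      exact h1 (by rw [← hcNρ, sub_eq_zero.mp h])
    have hc₂ : c - b₂ ≠ 0 := by
      intro h
      exact h2 (by rw [← hcNρ, sub_eq_zero.mp h])
    set S₁ : ℂ := ∑ i ∈ Finset.range N, b₁ ^ i * c ^ (N - 1 - i) with hS₁def
    set S₂ : ℂ := ∑ i ∈ Finset.range N, b₂ ^ i * c ^ (N - 1 - i) with hS₂def
    have e₁ : r ^ N - b₁ ^ N = S₁ * (c - b₁) := by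
      have h := geom_sum₂_mul b₁ c N
      rw [hcNρ] at h
      linear_combination h
    have e₂ : r ^ N - b₂ ^ N = S₂ * (c - b₂) := by
      have h := geom_sum₂_mul b₂ c N
      rw [hcNρ] at h
      linear_combination h
    have hS₁ne : S₁ ≠ 0 := by
      intro h; rw [h, zero_mul] at e₁; exact hE₁ e₁
    have hS₂ne : S₂ ≠ 0 := by
      intro h; rw [h, zero_mul] at e₂; exact hE₂ e₂
    have hrhs : ∑ i ∈ Finset.range N,
        (b₁ ^ (i + 1) / ((b₁ - b₂) * (r ^ N - b₁ ^ N))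
          - b₂ ^ (i + 1) / ((b₁ - b₂) * (r ^ N - b₂ ^ N))) * c ^ (N - 1 - i)
        = b₁ * S₁ / ((b₁ - b₂) * (r ^ N - b₁ ^ N))
          - b₂ * S₂ / ((b₁ - b₂) * (r ^ N - b₂ ^ N)) := by
      rw [hS₁def, hS₂def, Finset.mul_sum, Finset.mul_sum, Finset.sum_div, Finset.sum_div,
        ← Finset.sum_sub_distrib]
      apply Finset.sum_congr rfl
      intro i _
      field_simp
      ring
    rw [hrhs, e₁, e₂]
    field_simp
    ring
  rw [Finset.sum_congr rfl key, Finset.sum_comm]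
  have hinner : ∀ i ∈ Finset.range N, i ≠ N - 1 →
      (∑ ρ ∈ Finset.range N, (r * ω⁻¹ ^ ρ) ^ (N - 1 - i)) = 0 := by
    intro i hi hne
    have hiN : i < N := Finset.mem_range.mp hi
    have hm1 : 0 < N - 1 - i := by omega
    have hm2 : N - 1 - i < N := by omega
    have hz : ∀ ρ : ℕ, (r * ω⁻¹ ^ ρ) ^ (N - 1 - i)
        = r ^ (N - 1 - i) * ((ω⁻¹ ^ (N - 1 - i)) ^ ρ) := by
      intro ρ
      rw [mul_pow, ← pow_mul, ← pow_mul, Nat.mul_comm]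
    simp only [hz, ← Finset.mul_sum]
    have hne1 : ω⁻¹ ^ (N - 1 - i) ≠ 1 := hζprim.pow_ne_one_of_pos_of_lt hm1.ne' hm2
    rw [geom_sum_eq hne1]
    rw [← pow_mul, Nat.mul_comm, pow_mul, hζN, one_pow, sub_self, zero_div, mul_zero]
  have hmain : ∑ i ∈ Finset.range N, ∑ ρ ∈ Finset.range N,
      (b₁ ^ (i + 1) / ((b₁ - b₂) * (r ^ N - b₁ ^ N))
        - b₂ ^ (i + 1) / ((b₁ - b₂) * (r ^ N - b₂ ^ N))) * (r * ω⁻¹ ^ ρ) ^ (N - 1 - i)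
      = (b₁ ^ N / ((b₁ - b₂) * (r ^ N - b₁ ^ N))
          - b₂ ^ N / ((b₁ - b₂) * (r ^ N - b₂ ^ N))) * N := by
    rw [Finset.sum_eq_single_of_mem (N - 1) (Finset.mem_range.mpr (by omega))]
    · rw [← Finset.mul_sum]
      have : ∀ ρ : ℕ, (r * ω⁻¹ ^ ρ) ^ (N - 1 - (N - 1)) = 1 := by
        intro ρ; rw [Nat.sub_self, pow_zero]
      simp only [this, Finset.sum_const, Finset.card_range, nsmul_eq_mul, mul_one]
      rw [Nat.sub_add_cancel hN]
    · intro i hi hne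
      rw [← Finset.mul_sum, hinner i hi hne, mul_zero]
  rw [hmain]
  rw [div_sub_div _ _ (mul_ne_zero hD hE₁) (mul_ne_zero hD hE₂), div_mul_eq_mul_div,
    div_eq_div_iff (mul_ne_zero (mul_ne_zero hD hE₁) (mul_ne_zero hD hE₂))
      (mul_ne_zero (mul_ne_zero hD (sub_ne_zero.mpr (Ne.symm h1)))
        (sub_ne_zero.mpr (Ne.symm h2)))]
  ring
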